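/- Let m₀, μ, H, k₂, L > 0 and choose θ with (m₀ + μH)/(m₀ + μH + μk₂/2) < θ < 1. Then for all vectors (in a real inner product space) e, q, s, c, β with ‖q‖ ≤ ‖β‖ (interpreted componentwise via norms), the quantity m₀‖e − q‖² + μH‖s − q‖² + μL²‖c‖² + μk₂‖β‖² is bounded below by C(‖e‖² + ‖q‖² + ‖s‖² + ‖c‖² + ‖β‖²) for some constant C > 0 depending only on θ, m₀, μ, H, k₂, L. -/

import Mathlib

noncomputable section

set_option maxHeartbeats 1000000 in
theorem stmt_9 {E : Type*} [NormedAddCommGroup E] [InnerProductSpace ℝ E]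
    (m₀ μ H k₂ L θ : ℝ) (hm₀ : 0 < m₀) (hμ : 0 < μ) (hH : 0 < H) (hk₂ : 0 < k₂) (hL : 0 < L)
    (hθl : (m₀ + μ * H) / (m₀ + μ * H + μ * k₂ / 2) < θ) (hθr : θ < 1) :
    ∃ C : ℝ, 0 < C ∧ ∀ e q s c β : E, ‖q‖ ≤ ‖β‖ →
      m₀ * ‖e - q‖ ^ 2 + μ * H * ‖s - q‖ ^ 2 + μ * L ^ 2 * ‖c‖ ^ 2 + μ * k₂ * ‖β‖ ^ 2 ≥
        C * (‖e‖ ^ 2 + ‖q‖ ^ 2 + ‖s‖ ^ 2 + ‖c‖ ^ 2 + ‖β‖ ^ 2) := by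
  have hD : (0:ℝ) < m₀ + μ * H + μ * k₂ / 2 := by positivity
  have hθ0 : 0 < θ := lt_trans (by positivity) hθl
  -- key: θ * (μ*k₂/2) > (1-θ) * (m₀ + μ*H)
  have hkey : (1 - θ) * (m₀ + μ * H) < θ * (μ * k₂ / 2) := by
    have := (div_lt_iff₀ hD).mp hθl
    nlinarith
  set C : ℝ := min ((1-θ)*m₀) (min ((1-θ)*μ*H) (min (μ*L^2) (min (μ*k₂/2)
      (θ*(μ*k₂/2) - (1-θ)*(m₀+μ*H))))) with hC
  have hC1 : C ≤ (1-θ)*m₀ := min_le_left _ _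
  have hC2 : C ≤ (1-θ)*μ*H := le_trans (min_le_right _ _) (min_le_left _ _)
  have hC3 : C ≤ μ*L^2 := le_trans (min_le_right _ _) (le_trans (min_le_right _ _) (min_le_left _ _))
  have hC4 : C ≤ μ*k₂/2 := le_trans (min_le_right _ _) (le_trans (min_le_right _ _)
      (le_trans (min_le_right _ _) (min_le_left _ _)))
  have hC5 : C ≤ θ*(μ*k₂/2) - (1-θ)*(m₀+μ*H) := le_trans (min_le_right _ _)
      (le_trans (min_le_right _ _) (le_trans (min_le_right _ _) (min_le_right _ _)))
  refine ⟨C, ?_, ?_⟩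
  · have h1θ : 0 < 1 - θ := by linarith
    apply lt_min (mul_pos h1θ hm₀) (lt_min (mul_pos (mul_pos h1θ hμ) hH) (lt_min (by positivity)
      (lt_min (by positivity) (by linarith))))
  intro e q s c β hqβ
  set a := ‖e‖
  set b := ‖q‖
  set t := ‖s‖
  set u := ‖c‖
  set v := ‖β‖
  have ha : 0 ≤ a := norm_nonneg _
  have hb : 0 ≤ b := norm_nonneg _
  have ht : 0 ≤ t := norm_nonneg _
  have hu : 0 ≤ u := norm_nonneg _
  have hv : 0 ≤ v := norm_nonneg _
  have h1 : (a - b)^2 ≤ ‖e - q‖^2 := by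
    have := abs_norm_sub_norm_le e q
    calc (a - b)^2 = |a - b|^2 := (sq_abs _).symm
      _ ≤ ‖e - q‖^2 := by nlinarith [abs_nonneg (a - b)]
  have h2 : (t - b)^2 ≤ ‖s - q‖^2 := by
    have := abs_norm_sub_norm_le s q
    calc (t - b)^2 = |t - b|^2 := (sq_abs _).symm
      _ ≤ ‖s - q‖^2 := by nlinarith [abs_nonneg (t - b)]
  -- scalar pieces, multiplied by θ
  have p1 : θ * (m₀ * (a-b)^2) ≥ θ*(1-θ)*m₀*a^2 - (1-θ)*m₀*b^2 := by
    nlinarith [mul_nonneg hm₀.le (sq_nonneg (θ*a - b))]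
  have p2 : θ * (μ*H * (t-b)^2) ≥ θ*(1-θ)*(μ*H)*t^2 - (1-θ)*(μ*H)*b^2 := by
    nlinarith [mul_nonneg (mul_nonneg hμ.le hH.le) (sq_nonneg (θ*t - b))]
  have hb2 : b^2 ≤ v^2 := by nlinarith
  -- C * (sum) * θ ≤ θ * LHS
  have final : θ * (m₀ * (a-b)^2 + μ*H*(t-b)^2 + μ*L^2*u^2 + μ*k₂*v^2) ≥
      θ * (C * (a^2 + b^2 + t^2 + u^2 + v^2)) := by
    have hca := mul_le_mul_of_nonneg_right hC1 (mul_nonneg hθ0.le (sq_nonneg a))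
    have hct := mul_le_mul_of_nonneg_right hC2 (mul_nonneg hθ0.le (sq_nonneg t))
    have hcu := mul_le_mul_of_nonneg_right hC3 (mul_nonneg hθ0.le (sq_nonneg u))
    have hcv := mul_le_mul_of_nonneg_right hC4 (mul_nonneg hθ0.le (sq_nonneg v))
    have hcb := mul_le_mul_of_nonneg_right hC5 (mul_nonneg hθ0.le (sq_nonneg b))
    have hsplit : θ*(μ*k₂)*v^2 ≥ θ*(μ*k₂/2)*v^2 + θ*(μ*k₂/2)*b^2 := by
      have := mul_le_mul_of_nonneg_left hb2 (by positivity : (0:ℝ) ≤ θ*(μ*k₂/2))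
      nlinarith
    have hgap : 0 ≤ ((1-θ)*(θ*(μ*k₂/2) - (1-θ)*(m₀+μ*H))) * b^2 :=
      mul_nonneg (mul_nonneg (by linarith) (by linarith)) (sq_nonneg b)
    nlinarith [p1, p2, hca, hct, hcu, hcv, hcb, hsplit, hgap]
  have hdiv := (mul_le_mul_iff_right₀ hθ0).mp (by linarith [final] : θ * (C * (a^2 + b^2 + t^2 + u^2 + v^2)) ≤ θ * (m₀ * (a-b)^2 + μ*H*(t-b)^2 + μ*L^2*u^2 + μ*k₂*v^2))
  have g1 : m₀*(a-b)^2 ≤ m₀*‖e-q‖^2 := mul_le_mul_of_nonneg_left h1 hm₀.le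
  have g2 : μ*H*(t-b)^2 ≤ μ*H*‖s-q‖^2 := mul_le_mul_of_nonneg_left h2 (by positivity)
  linarith
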